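/- Let Y ⊆ (ℤ/4ℤ)^n be a finite set and let t ∈ ℕ satisfy |Y ∖ {0}| < 2^t. Then there exist subsets I_1, …, I_t ⊆ {1,…,n} such that, setting W = {y ∈ (ℤ/4ℤ)^n : ∑_{j ∈ I_i} y_j = 0 in ℤ/4ℤ for all i = 1,…,t}, one has Y ∩ W ⊆ {0}. -/

import Mathlib

lemma half_lemma {n : ℕ} (y : Fin n → ZMod 4) (hy : y ≠ 0) :
    2 * ((Finset.univ : Finset (Finset (Fin n))).filter
        (fun I => (∑ j ∈ I, y j) = 0)).card ≤ 2 ^ n := by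
  obtain ⟨j₀, hj₀⟩ : ∃ j, y j ≠ 0 := by
    by_contra h; push_neg at h; exact hy (funext h)
  set f : Finset (Fin n) → Finset (Fin n) :=
    fun I => if j₀ ∈ I then I.erase j₀ else insert j₀ I with hf
  have hff : ∀ I, f (f I) = I := by
    intro I
    by_cases h : j₀ ∈ I
    · simp [hf, h, Finset.mem_erase, Finset.insert_erase h]
    · simp [hf, h, Finset.erase_insert h]
  have hsum : ∀ I, (∑ j ∈ I, y j) = 0 → (∑ j ∈ f I, y j) ≠ 0 := by
    intro I hI
    by_cases h : j₀ ∈ I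
    · simp only [hf, if_pos h]
      intro h0
      have := Finset.sum_erase_add I y h
      rw [h0, zero_add] at this
      exact hj₀ (by rw [this, hI])
    · simp only [hf, if_neg h]
      rw [Finset.sum_insert h, hI, add_zero]
      exact hj₀
  have hcard : ((Finset.univ : Finset (Finset (Fin n))).filter
        (fun I => (∑ j ∈ I, y j) = 0)).card ≤
      ((Finset.univ : Finset (Finset (Fin n))).filter
        (fun I => ¬ (∑ j ∈ I, y j) = 0)).card := by
    apply Finset.card_le_card_of_injOn f
    · intro I hI
      simp only [Finset.coe_filter, Finset.mem_coe, Finset.mem_filter, Finset.mem_univ, true_and, Set.mem_setOf_eq] at hI ⊢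
      exact hsum I hI
    · intro a _ b _ hab
      have := congrArg f hab
      rwa [hff, hff] at this
  have htot := Finset.card_filter_add_card_filter_not
      (s := (Finset.univ : Finset (Finset (Fin n))))
      (p := fun I => (∑ j ∈ I, y j) = 0)
  have : (Finset.univ : Finset (Finset (Fin n))).card = 2 ^ n := by
    simp [Fintype.card_finset]
  omega

lemma aux_lemma {n : ℕ} (t : ℕ) (S : Finset (Fin n → ZMod 4))
    (h0 : (0 : Fin n → ZMod 4) ∉ S) (hS : S.card < 2 ^ t) :
    ∃ I : Fin t → Finset (Fin n), ∀ y ∈ S, ∃ i, (∑ j ∈ I i, y j) ≠ 0 := by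
  induction t generalizing S with
  | zero =>
    have : S = ∅ := Finset.card_eq_zero.mp (by omega)
    exact ⟨fun i => ∅, by simp [this]⟩
  | succ t ih =>
    -- averaging: find I₀ with 2 * |{y ∈ S : ∑_{j∈I₀} y j = 0}| ≤ |S|
    have havg : ∃ I₀ : Finset (Fin n),
        2 * (S.filter (fun y => (∑ j ∈ I₀, y j) = 0)).card ≤ S.card := by
      have hsum : ∑ I ∈ (Finset.univ : Finset (Finset (Fin n))),
          2 * (S.filter (fun y => (∑ j ∈ I, y j) = 0)).card ≤
          ∑ _I ∈ (Finset.univ : Finset (Finset (Fin n))), S.card := by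
        have swap : ∑ I ∈ (Finset.univ : Finset (Finset (Fin n))),
            (S.filter (fun y => (∑ j ∈ I, y j) = 0)).card =
            ∑ y ∈ S, ((Finset.univ : Finset (Finset (Fin n))).filter
              (fun I => (∑ j ∈ I, y j) = 0)).card := by
          simp_rw [Finset.card_filter]
          rw [Finset.sum_comm]
        rw [← Finset.mul_sum, swap, Finset.mul_sum]
        calc ∑ y ∈ S, 2 * ((Finset.univ : Finset (Finset (Fin n))).filter
              (fun I => (∑ j ∈ I, y j) = 0)).card
            ≤ ∑ _y ∈ S, 2 ^ n := by
              apply Finset.sum_le_sum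
              intro y hy
              exact half_lemma y (fun h => h0 (h ▸ hy))
          _ = ∑ _I ∈ (Finset.univ : Finset (Finset (Fin n))), S.card := by
              simp [Finset.card_univ, Fintype.card_finset, mul_comm]
      obtain ⟨I₀, _, hI₀⟩ := Finset.exists_le_of_sum_le
        (Finset.univ_nonempty) hsum
      exact ⟨I₀, hI₀⟩
    obtain ⟨I₀, hI₀⟩ := havg
    set S' := S.filter (fun y => (∑ j ∈ I₀, y j) = 0) with hS'
    have h0' : (0 : Fin n → ZMod 4) ∉ S' := fun h => h0 (Finset.mem_filter.mp h).1
    have hS'c : S'.card < 2 ^ t := by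
      have := hI₀
      rw [pow_succ] at hS
      omega
    obtain ⟨I, hI⟩ := ih S' h0' hS'c
    refine ⟨Fin.cons I₀ I, fun y hy => ?_⟩
    by_cases hz : (∑ j ∈ I₀, y j) = 0
    · obtain ⟨i, hi⟩ := hI y (Finset.mem_filter.mpr ⟨hy, hz⟩)
      exact ⟨i.succ, by simpa using hi⟩
    · exact ⟨0, by simpa using hz⟩

theorem subset_equations_avoiding_Y {n : ℕ} (Y : Set (Fin n → ZMod 4)) (t : ℕ)
    (hY : Nat.card ↥(Y \ {0}) < 2 ^ t) :
    ∃ I : Fin t → Finset (Fin n),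
      Y ∩ {y : Fin n → ZMod 4 | ∀ i, (∑ j ∈ I i, y j) = 0} ⊆ {0} := by
  have hfin : (Y \ {0}).Finite := Set.toFinite _
  have hcard : hfin.toFinset.card < 2 ^ t := by
    rwa [Nat.card_coe_set_eq, Set.ncard_eq_toFinset_card _ hfin] at hY
  have h0 : (0 : Fin n → ZMod 4) ∉ hfin.toFinset := by
    simp [Set.Finite.mem_toFinset]
  obtain ⟨I, hI⟩ := aux_lemma t hfin.toFinset h0 hcard
  refine ⟨I, fun y hy => ?_⟩
  obtain ⟨hyY, hyW⟩ := hy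
  by_contra hne
  obtain ⟨i, hi⟩ := hI y (hfin.mem_toFinset.mpr ⟨hyY, hne⟩)
  exact hi (hyW i)
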